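/- For t ≥ n+1 and δ > 0, define the n-variate exponential t-sum g_{t,n}(z) := (e^{δ z_1} + 1)^{t−n} + e^{δ z_2} + ... + e^{δ z_n}. Then the Hausdorff distance between Re(Z(g_{t,n})) and Trop(g_{t,n}) is at least log(t−n)/δ. -/

import Mathlib

noncomputable section

/-- Real dot product. -/
def dotR {n : ℕ} (a w : Fin n → ℝ) : ℝ := ∑ i, a i * w i

/-- The vector of real parts of `z ∈ ℂⁿ`. -/
def rePart {n : ℕ} (z : Fin n → ℂ) : EuclideanSpace ℝ (Fin n) := WithLp.toLp 2 (fun i => (z i).re)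

/-- The frequencies of `g_{t,n}(z) = (e^{δz₁}+1)^{t-n} + e^{δz₂} + ⋯ + e^{δzₙ}`
after binomial expansion: `jδe₁` for `0 ≤ j ≤ t-n`, together with `δe₂,…,δeₙ`. -/
def freq18 (n t : ℕ) (δ : ℝ) : Fin (t - n + 1) ⊕ Fin (n - 1) → EuclideanSpace ℝ (Fin n)
  | .inl j => WithLp.toLp 2 (fun i => if (i : ℕ) = 0 then (j : ℝ) * δ else 0)
  | .inr i' => WithLp.toLp 2 (fun i => if (i : ℕ) = (i' : ℕ) + 1 then δ else 0)

/-- The corresponding `log |coefficient|` data: `log C(t-n, j)` for the term `jδe₁`,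
and `0` for the terms `δe₂,…,δeₙ`. -/
def coeff18 (n t : ℕ) : Fin (t - n + 1) ⊕ Fin (n - 1) → ℝ
  | .inl j => Real.log (Nat.choose (t - n) j)
  | .inr _ => 0

/-- The Archimedean tropical variety of `g_{t,n}`. -/
def Trop18 (n t : ℕ) (δ : ℝ) : Set (EuclideanSpace ℝ (Fin n)) :=
  {w | ∃ j k : Fin (t - n + 1) ⊕ Fin (n - 1), j ≠ k ∧
    (∀ i, dotR (freq18 n t δ i) w + coeff18 n t i ≤ dotR (freq18 n t δ j) w + coeff18 n t j) ∧
    dotR (freq18 n t δ j) w + coeff18 n t j = dotR (freq18 n t δ k) w + coeff18 n t k}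

/-- `Re(Z(g_{t,n}))`. -/
def ReZ18 (n t : ℕ) (hn : 1 ≤ n) (δ : ℝ) : Set (EuclideanSpace ℝ (Fin n)) :=
  {x | ∃ z : Fin n → ℂ,
    (Complex.exp (δ * z ⟨0, hn⟩) + 1) ^ (t - n)
        + ∑ i ∈ Finset.univ.filter (fun i : Fin n => (i : ℕ) ≠ 0), Complex.exp (δ * z i) = 0
      ∧ rePart z = x}

lemma dotR_single' {n : ℕ} (a : ℝ) (k : Fin n) (w : Fin n → ℝ) :
    (∑ i : Fin n, (if (i : ℕ) = (k : ℕ) then a else 0) * w i) = a * w k := by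
  rw [Finset.sum_eq_single k]
  · simp
  · intro b _ hb
    rw [if_neg (fun h => hb (Fin.ext h)), zero_mul]
  · intro h; exact absurd (Finset.mem_univ k) h

lemma coord_le_dist {n : ℕ} (x y : EuclideanSpace ℝ (Fin n)) (i : Fin n) :
    |x i - y i| ≤ dist x y := by
  rw [EuclideanSpace.dist_eq, ← Real.sqrt_sq_eq_abs]
  apply Real.sqrt_le_sqrt
  rw [show (x i - y i) ^ 2 = dist (x i) (y i) ^ 2 by rw [Real.dist_eq, sq_abs]]
  exact Finset.single_le_sum (fun j _ => sq_nonneg (dist (x j) (y j))) (Finset.mem_univ i)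

/-- the Hausdorff distance between `Re(Z(g_{t,n}))` and `Trop(g_{t,n})`
is at least `log(t-n)/δ`. -/
theorem hausdorff_lower_bound (n t : ℕ) (hn : 1 ≤ n) (ht : n + 1 ≤ t)
    (δ : ℝ) (hδ : 0 < δ) :
    ENNReal.ofReal (Real.log ((t : ℝ) - (n : ℝ)) / δ)
      ≤ EMetric.hausdorffEdist (ReZ18 n t hn δ) (Trop18 n t δ) := by
  set L : ℝ := Real.log ((t : ℝ) - (n : ℝ)) / δ with hLdef
  rcases le_or_gt L 0 with hL | hL
  · rw [ENNReal.ofReal_eq_zero.mpr hL]; exact zero_le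
  have hnt : n ≤ t := by omega
  have hM : ((t - n : ℕ) : ℝ) = (t : ℝ) - (n : ℝ) := by
    rw [Nat.cast_sub hnt]
  have hlogpos : 0 < Real.log ((t - n : ℕ) : ℝ) := by
    have h1 : Real.log ((t : ℝ) - (n : ℝ)) = L * δ := by
      rw [hLdef]; field_simp
    rw [hM, h1]; positivity
  have hm2 : 2 ≤ t - n := by
    by_contra h
    push_neg at h
    have h1 : ((t - n : ℕ) : ℝ) ≤ 1 := by exact_mod_cast Nat.lt_succ_iff.mp h
    have := Real.log_nonpos (by positivity) h1
    linarith
  have hδL : δ * L = Real.log ((t - n : ℕ) : ℝ) := by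
    rw [hM, hLdef]; field_simp
  have hlognn : 0 ≤ Real.log ((t - n : ℕ) : ℝ) := hlogpos.le
  by_contra hcon
  push_neg at hcon
  have hHtop : EMetric.hausdorffEdist (ReZ18 n t hn δ) (Trop18 n t δ) ≠ ⊤ :=
    (hcon.trans_le le_top).ne
  have hHlt : (EMetric.hausdorffEdist (ReZ18 n t hn δ) (Trop18 n t δ)).toReal < L :=
    (ENNReal.lt_ofReal_iff_toReal_lt hHtop).mp hcon
  set c : ℝ := ((EMetric.hausdorffEdist (ReZ18 n t hn δ) (Trop18 n t δ)).toReal + L) / 2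
    with hcdef
  have htR0 : 0 ≤ (EMetric.hausdorffEdist (ReZ18 n t hn δ) (Trop18 n t δ)).toReal :=
    ENNReal.toReal_nonneg
  have hc0 : 0 ≤ c := by rw [hcdef]; linarith
  have hcL : c < L := by rw [hcdef]; linarith
  -- the witness point in the tropical variety
  set β : ℝ := Real.exp (δ * (L - c)) - 1 with hβdef
  have hβ0 : 0 < β := by
    have h1 : (0 : ℝ) < δ * (L - c) := mul_pos hδ (by linarith)
    have h2 : Real.exp 0 < Real.exp (δ * (L - c)) := Real.exp_lt_exp.mpr h1
    rw [Real.exp_zero] at h2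
    rw [hβdef]; linarith
  set P : ℝ := β ^ (t - n) with hPdef
  have hP0 : 0 < P := pow_pos hβ0 _
  have hn0 : (0 : ℝ) < (n : ℝ) := by exact_mod_cast hn
  set K : ℝ := max 0 (c - Real.log (P / (n : ℝ)) / δ + 1) with hKdef
  have hK0 : 0 ≤ K := le_max_left _ _
  have hKexp : Real.exp (δ * (c - K)) ≤ P / (n : ℝ) * Real.exp (-δ) := by
    have h1 : c - Real.log (P / (n : ℝ)) / δ + 1 ≤ K := le_max_right _ _
    have h3 : c - K ≤ Real.log (P / (n : ℝ)) / δ - 1 := by linarith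
    have h4 : δ * (c - K) ≤ Real.log (P / (n : ℝ)) - δ := by
      have h5 := mul_le_mul_of_nonneg_left h3 hδ.le
      have h6 : δ * (Real.log (P / (n : ℝ)) / δ - 1) = Real.log (P / (n : ℝ)) - δ := by
        field_simp
      linarith
    calc Real.exp (δ * (c - K)) ≤ Real.exp (Real.log (P / (n : ℝ)) - δ) :=
          Real.exp_le_exp.mpr h4
      _ = P / (n : ℝ) * Real.exp (-δ) := by
          rw [Real.exp_sub, Real.exp_log (div_pos hP0 hn0), Real.exp_neg]
          ring
  set w : EuclideanSpace ℝ (Fin n) := WithLp.toLp 2 (fun i => if (i : ℕ) = 0 then L else -K) with hwdef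
  have hw0 : w ⟨0, hn⟩ = L := by simp [hwdef]
  -- computation of the tropical terms
  have hTl : ∀ j : Fin (t - n + 1),
      dotR (freq18 n t δ (Sum.inl j)) w = (j : ℝ) * Real.log ((t - n : ℕ) : ℝ) := by
    intro j
    have h1 : dotR (freq18 n t δ (Sum.inl j)) w = ((j : ℝ) * δ) * w ⟨0, hn⟩ := by
      show (∑ i : Fin n, (if (i : ℕ) = 0 then (j : ℝ) * δ else 0) * w i) = _
      simpa using dotR_single' ((j : ℝ) * δ) (⟨0, hn⟩ : Fin n) w
    rw [h1, hw0, mul_assoc, hδL]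
  have hTr : ∀ i' : Fin (n - 1), dotR (freq18 n t δ (Sum.inr i')) w = δ * (-K) := by
    intro i'
    have hlt : (i' : ℕ) + 1 < n := by have := i'.isLt; omega
    have h1 : dotR (freq18 n t δ (Sum.inr i')) w = δ * w ⟨(i' : ℕ) + 1, hlt⟩ := by
      show (∑ i : Fin n, (if (i : ℕ) = (i' : ℕ) + 1 then δ else 0) * w i) = _
      exact dotR_single' δ (⟨(i' : ℕ) + 1, hlt⟩ : Fin n) w
    rw [h1, show w ⟨(i' : ℕ) + 1, hlt⟩ = -K from by simp [hwdef]]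
  have hchoose_le : ∀ j : ℕ, j ≤ t - n →
      Real.log ((Nat.choose (t - n) j : ℕ) : ℝ)
        ≤ (((t - n : ℕ) : ℝ) - (j : ℝ)) * Real.log ((t - n : ℕ) : ℝ) := by
    intro j hj
    have h1 : Nat.choose (t - n) j ≤ (t - n) ^ (t - n - j) := by
      calc Nat.choose (t - n) j = Nat.choose (t - n) (t - n - j) :=
            (Nat.choose_symm hj).symm
        _ ≤ (t - n) ^ (t - n - j) := Nat.choose_le_pow _ _
    have h2 : ((Nat.choose (t - n) j : ℕ) : ℝ) ≤ ((t - n : ℕ) : ℝ) ^ (t - n - j) := by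
      exact_mod_cast h1
    have hpos : (0 : ℝ) < ((Nat.choose (t - n) j : ℕ) : ℝ) := by
      exact_mod_cast Nat.choose_pos hj
    have h3 := Real.log_le_log hpos h2
    rw [Real.log_pow] at h3
    have h4 : ((t - n - j : ℕ) : ℝ) = ((t - n : ℕ) : ℝ) - (j : ℝ) := by
      rw [Nat.cast_sub hj]
    rw [h4] at h3
    exact h3
  -- w belongs to the tropical variety
  have hwTrop : w ∈ Trop18 n t δ := by
    simp only [Trop18, Set.mem_setOf_eq]
    refine ⟨Sum.inl ⟨t - n, by omega⟩, Sum.inl ⟨t - n - 1, by omega⟩, ?_, ?_, ?_⟩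
    · simp only [ne_eq, Sum.inl.injEq, Fin.mk.injEq]
      omega
    · intro i
      have hmain : dotR (freq18 n t δ (Sum.inl ⟨t - n, by omega⟩)) w
          + coeff18 n t (Sum.inl ⟨t - n, by omega⟩)
          = ((t - n : ℕ) : ℝ) * Real.log ((t - n : ℕ) : ℝ) := by
        rw [hTl]
        simp [coeff18, Nat.choose_self]
      rw [hmain]
      rcases i with j | i'
      · rw [hTl]
        simp only [coeff18]
        have hj : (j : ℕ) ≤ t - n := by have := j.isLt; omega
        have h1 := hchoose_le (j : ℕ) hj
        nlinarith [h1]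
      · rw [hTr]
        simp only [coeff18]
        have h1 : δ * (-K) ≤ 0 := by nlinarith
        have h2 : (0 : ℝ) ≤ ((t - n : ℕ) : ℝ) * Real.log ((t - n : ℕ) : ℝ) := by
          apply mul_nonneg (by positivity) hlognn
        linarith
    · rw [hTl, hTl]
      simp only [coeff18]
      have h5 : Nat.choose (t - n) (t - n - 1) = t - n := by
        rw [Nat.choose_symm (show 1 ≤ t - n by omega), Nat.choose_one_right]
      rw [Nat.choose_self, Nat.cast_one, Real.log_one, h5]
      have h6 : ((t - n - 1 : ℕ) : ℝ) = ((t - n : ℕ) : ℝ) - 1 := by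
        rw [Nat.cast_sub (show 1 ≤ t - n by omega)]
        norm_num
      rw [h6]
      ring
  -- every point of ReZ18 is at distance ≥ c from w
  have hfar : ∀ x ∈ ReZ18 n t hn δ, c ≤ dist w x := by
    intro x hx
    by_contra hlt
    push_neg at hlt
    simp only [ReZ18, Set.mem_setOf_eq] at hx
    obtain ⟨z, hz, hre⟩ := hx
    have hxz : ∀ i, x i = (z i).re := by
      intro i
      rw [← hre]
      rfl
    have hcoord : ∀ i, |w i - x i| < c := fun i => lt_of_le_of_lt (coord_le_dist w x i) hlt
    have hx0 : L - c < x ⟨0, hn⟩ := by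
      have h := hcoord ⟨0, hn⟩
      rw [hw0] at h
      have := abs_lt.mp h
      linarith [this.2]
    have hxi : ∀ i : Fin n, (i : ℕ) ≠ 0 → x i < c - K := by
      intro i hi
      have h := hcoord i
      have hwi : w i = -K := by simp [hwdef, hi]
      rw [hwi] at h
      have := abs_lt.mp h
      linarith [this.1]
    set E := Complex.exp (δ * z ⟨0, hn⟩) with hEdef
    have habsE : ‖E‖ = Real.exp (δ * x ⟨0, hn⟩) := by
      rw [hEdef, Complex.norm_exp]
      congr 1
      rw [Complex.re_ofReal_mul, hxz]
    have hβE : β ≤ ‖E + 1‖ := by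
      have h1 : ‖E‖ ≤ ‖E + 1‖ + 1 := by
        calc ‖E‖ = ‖(E + 1) + (-1)‖ := by congr 1; ring
          _ ≤ ‖E + 1‖ + ‖-1‖ := norm_add_le _ _
          _ = ‖E + 1‖ + 1 := by simp
      have h2 : Real.exp (δ * (L - c)) ≤ ‖E‖ := by
        rw [habsE]
        exact Real.exp_le_exp.mpr (mul_le_mul_of_nonneg_left hx0.le hδ.le)
      rw [hβdef]
      linarith
    have habseq : ‖(E + 1) ^ (t - n)‖
        = ‖∑ i ∈ Finset.univ.filter (fun i : Fin n => (i : ℕ) ≠ 0),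
            Complex.exp (δ * z i)‖ := by
      have h1 : (E + 1) ^ (t - n)
          = -(∑ i ∈ Finset.univ.filter (fun i : Fin n => (i : ℕ) ≠ 0),
              Complex.exp (δ * z i)) := by
        rw [hEdef]
        exact eq_neg_of_add_eq_zero_left hz
      rw [h1, norm_neg]
    have hsum : ‖∑ i ∈ Finset.univ.filter (fun i : Fin n => (i : ℕ) ≠ 0),
        Complex.exp (δ * z i)‖ ≤ (n : ℝ) * Real.exp (δ * (c - K)) := by
      calc ‖∑ i ∈ Finset.univ.filter (fun i : Fin n => (i : ℕ) ≠ 0),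
            Complex.exp (δ * z i)‖
          ≤ ∑ i ∈ Finset.univ.filter (fun i : Fin n => (i : ℕ) ≠ 0),
              ‖Complex.exp (δ * z i)‖ := norm_sum_le _ _
        _ ≤ ∑ _i ∈ Finset.univ.filter (fun i : Fin n => (i : ℕ) ≠ 0),
              Real.exp (δ * (c - K)) := by
            apply Finset.sum_le_sum
            intro i hi
            rw [Complex.norm_exp, Complex.re_ofReal_mul, ← hxz]
            have hi' := (Finset.mem_filter.mp hi).2
            exact Real.exp_le_exp.mpr (mul_le_mul_of_nonneg_left (hxi i hi').le hδ.le)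
        _ = ((Finset.univ.filter (fun i : Fin n => (i : ℕ) ≠ 0)).card : ℝ)
              * Real.exp (δ * (c - K)) := by
            rw [Finset.sum_const, nsmul_eq_mul]
        _ ≤ (n : ℝ) * Real.exp (δ * (c - K)) := by
            apply mul_le_mul_of_nonneg_right _ (Real.exp_nonneg _)
            have hcard : (Finset.univ.filter (fun i : Fin n => (i : ℕ) ≠ 0)).card ≤ n := by
              calc (Finset.univ.filter (fun i : Fin n => (i : ℕ) ≠ 0)).card
                  ≤ (Finset.univ : Finset (Fin n)).card := Finset.card_filter_le _ _
                _ = n := by simp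
            exact_mod_cast hcard
    have hpow : P ≤ ‖(E + 1) ^ (t - n)‖ := by
      rw [norm_pow, hPdef]
      exact pow_le_pow_left₀ hβ0.le hβE _
    have hfin : P ≤ (n : ℝ) * Real.exp (δ * (c - K)) := by
      rw [habseq] at hpow
      linarith
    have h6 : (n : ℝ) * Real.exp (δ * (c - K)) ≤ P * Real.exp (-δ) := by
      calc (n : ℝ) * Real.exp (δ * (c - K))
          ≤ (n : ℝ) * (P / (n : ℝ) * Real.exp (-δ)) :=
            mul_le_mul_of_nonneg_left hKexp hn0.le
        _ = P * Real.exp (-δ) := by field_simp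
    have h8 : Real.exp (-δ) < 1 := by
      rw [← Real.exp_zero]
      exact Real.exp_lt_exp.mpr (by linarith)
    have h9 : P * Real.exp (-δ) < P * 1 := mul_lt_mul_of_pos_left h8 hP0
    rw [mul_one] at h9
    linarith
  -- assembling
  have key : ENNReal.ofReal c
      ≤ EMetric.hausdorffEdist (ReZ18 n t hn δ) (Trop18 n t δ) := by
    show ENNReal.ofReal c ≤ Metric.hausdorffEDist (ReZ18 n t hn δ) (Trop18 n t δ)
    rw [EMetric.hausdorffEdist_comm]
    refine le_trans ?_ (EMetric.infEdist_le_hausdorffEdist_of_mem hwTrop)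
    rw [EMetric.le_infEdist]
    intro y hy
    rw [edist_dist]
    exact ENNReal.ofReal_le_ofReal (hfar y hy)
  have hfinal := (ENNReal.ofReal_le_iff_le_toReal hHtop).mp key
  rw [hcdef] at hfinal
  linarith
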